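/- Let k ≥ 1, ℓ ≥ 2, d ≥ 1, n ≥ 1 be integers and let A₁, …, A_k be sets, each consisting of n binary vectors of dimension d (vectors a^i_1, …, a^i_n ∈ {0,1}^d for each i). Construct the finite simple graph G as follows: for each i ∈ [k] and j ∈ [n] there is a vertex a^i_j; for each i ∈ [k] there is a hub vertex A_i adjacent to a^i_1, …, a^i_n, together with a path of ℓ − 1 new vertices attached to A_i, whose endpoint farthest from A_i is labelled v_i; for each t ∈ [d] there is a vertex D_t, adjacent to a^i_j if and only if a^i_j[t] = 0, together with a path of ℓ − 1 new vertices attached to D_t, whose endpoint farthest from D_t is labelled w_t; there are no other edges. Then G has a k-dominating set at distance ℓ if and only if there exist vectors a₁ ∈ A₁, …, a_k ∈ A_k such that for every coordinate t ∈ [d] at least one of a₁[t], …, a_k[t] equals 0. -/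
import Mathlib


/-- Vertices of the reduction graph for `k`-dominating set at distance `ℓ`:
vector vertices `a^i_j`, hub vertices `A_i`, path vertices attached to each hub
(the endpoint farthest from `A_i` is `v_i`), dimension vertices `D_t`, and path
vertices attached to each `D_t` (the endpoint farthest from `D_t` is `w_t`). -/
inductive OVVert (k n d ℓ : ℕ) : Type
  | vec : Fin k → Fin n → OVVert k n d ℓ
  | hub : Fin k → OVVert k n d ℓ
  | hpath : Fin k → Fin (ℓ - 1) → OVVert k n d ℓ
  | dim : Fin d → OVVert k n d ℓ
  | dpath : Fin d → Fin (ℓ - 1) → OVVert k n d ℓ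

/-- The reduction graph: `a^i_j` is adjacent to the hub `A_i`; `a^i_j` is adjacent to `D_t`
iff the `t`-th coordinate of the vector `a^i_j` is `0` (here `false`); a path of `ℓ − 1`
new vertices is attached to each hub `A_i` and each dimension vertex `D_t`;
there are no other edges. -/
def OVGraph (k n d ℓ : ℕ) (a : Fin k → Fin n → Fin d → Bool) :
    SimpleGraph (OVVert k n d ℓ) :=
  SimpleGraph.fromRel (fun x y =>
    match x, y with
    | .vec i _, .hub i' => i = i'
    | .vec i j, .dim t => a i j t = false
    | .hub i, .hpath i' p => i = i' ∧ p.val = 0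
    | .hpath i p, .hpath i' q => i = i' ∧ q.val = p.val + 1
    | .dim t, .dpath t' p => t = t' ∧ p.val = 0
    | .dpath t p, .dpath t' q => t = t' ∧ q.val = p.val + 1
    | _, _ => False)

set_option linter.unreachableTactic false
set_option linter.unusedTactic false
set_option linter.unusedVariables false

namespace OVAux

variable {k n d ℓ : ℕ}

def phi (i : Fin k) : OVVert k n d ℓ → ℕ
  | .vec i' _ => if i' = i then ℓ else ℓ + 2
  | .hub i' => if i' = i then ℓ - 1 else ℓ + 3
  | .hpath i' q => if i' = i then ℓ - 2 - q.val else ℓ + 4 + q.val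
  | .dim _ => ℓ + 1
  | .dpath _ q => ℓ + 2 + q.val

def psi (a : Fin k → Fin n → Fin d → Bool) (t : Fin d) : OVVert k n d ℓ → ℕ
  | .vec i j => if a i j t = false then ℓ else ℓ + 2
  | .hub _ => ℓ + 1
  | .hpath _ q => ℓ + 2 + q.val
  | .dim t' => if t' = t then ℓ - 1 else ℓ + 1
  | .dpath t' q => if t' = t then ℓ - 2 - q.val else ℓ + 2 + q.val

lemma pot {V : Type*} {G : SimpleGraph V} {φ : V → ℕ}
    (h : ∀ x y, G.Adj x y → φ x ≤ φ y + 1) {u v : V} (w : G.Walk u v) :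
    φ u ≤ φ v + w.length := by
  induction w with
  | nil => simp
  | cons h' p ih =>
    simp only [SimpleGraph.Walk.length_cons]
    have := h _ _ h'
    omega

lemma phi_lip (hℓ : 2 ≤ ℓ) (a : Fin k → Fin n → Fin d → Bool) (i : Fin k) :
    ∀ x y : OVVert k n d ℓ, (OVGraph k n d ℓ a).Adj x y → phi i x ≤ phi i y + 1 := by
  intro x y hxy
  rw [OVGraph, SimpleGraph.fromRel_adj] at hxy
  obtain ⟨-, h | h⟩ := hxy <;>
    rcases x with ⟨i', j'⟩ | i' | ⟨i', ⟨p, hp⟩⟩ | t' | ⟨t', ⟨p, hp⟩⟩ <;>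
    rcases y with ⟨i'', j''⟩ | i'' | ⟨i'', ⟨q, hq⟩⟩ | t'' | ⟨t'', ⟨q, hq⟩⟩ <;>
    simp_all [phi] <;> first | omega | (split_ifs <;> first | omega | simp_all <;> omega)

lemma psi_lip (hℓ : 2 ≤ ℓ) (a : Fin k → Fin n → Fin d → Bool) (t : Fin d) :
    ∀ x y : OVVert k n d ℓ, (OVGraph k n d ℓ a).Adj x y → psi a t x ≤ psi a t y + 1 := by
  intro x y hxy
  rw [OVGraph, SimpleGraph.fromRel_adj] at hxy
  obtain ⟨-, h | h⟩ := hxy <;>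
    rcases x with ⟨i', j'⟩ | i' | ⟨i', ⟨p, hp⟩⟩ | t' | ⟨t', ⟨p, hp⟩⟩ <;>
    rcases y with ⟨i'', j''⟩ | i'' | ⟨i'', ⟨q, hq⟩⟩ | t'' | ⟨t'', ⟨q, hq⟩⟩ <;>
    simp_all [psi] <;> first | omega | (split_ifs <;> first | omega | simp_all <;> omega)

variable (a : Fin k → Fin n → Fin d → Bool)

lemma adj_vec_hub (i : Fin k) (j : Fin n) :
    (OVGraph k n d ℓ a).Adj (.vec i j) (.hub i) := by
  rw [OVGraph, SimpleGraph.fromRel_adj]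
  exact ⟨by simp, Or.inl rfl⟩

lemma adj_vec_dim {i : Fin k} {j : Fin n} {t : Fin d} (h : a i j t = false) :
    (OVGraph k n d ℓ a).Adj (.vec i j) (.dim t) := by
  rw [OVGraph, SimpleGraph.fromRel_adj]
  exact ⟨by simp, Or.inl h⟩

lemma adj_hub_hpath (i : Fin k) (hp : 0 < ℓ - 1) :
    (OVGraph k n d ℓ a).Adj (.hub i) (.hpath i ⟨0, hp⟩) := by
  rw [OVGraph, SimpleGraph.fromRel_adj]
  exact ⟨by simp, Or.inl ⟨rfl, rfl⟩⟩

lemma adj_hpath (i : Fin k) {p : ℕ} (hp : p + 1 < ℓ - 1) :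
    (OVGraph k n d ℓ a).Adj (.hpath i ⟨p, by omega⟩) (.hpath i ⟨p + 1, hp⟩) := by
  rw [OVGraph, SimpleGraph.fromRel_adj]
  refine ⟨?_, Or.inl ⟨rfl, rfl⟩⟩
  intro h
  injection h with h1 h2
  have h3 := congrArg Fin.val h2
  simp at h3

lemma adj_dim_dpath (t : Fin d) (hp : 0 < ℓ - 1) :
    (OVGraph k n d ℓ a).Adj (.dim t) (.dpath t ⟨0, hp⟩) := by
  rw [OVGraph, SimpleGraph.fromRel_adj]
  exact ⟨by simp, Or.inl ⟨rfl, rfl⟩⟩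

lemma adj_dpath (t : Fin d) {p : ℕ} (hp : p + 1 < ℓ - 1) :
    (OVGraph k n d ℓ a).Adj (.dpath t ⟨p, by omega⟩) (.dpath t ⟨p + 1, hp⟩) := by
  rw [OVGraph, SimpleGraph.fromRel_adj]
  refine ⟨?_, Or.inl ⟨rfl, rfl⟩⟩
  intro h
  injection h with h1 h2
  have h3 := congrArg Fin.val h2
  simp at h3

lemma walk_hpath (i : Fin k) :
    ∀ (p : ℕ) (hp : p < ℓ - 1),
      ∃ w : (OVGraph k n d ℓ a).Walk (.hub i) (.hpath i ⟨p, hp⟩), w.length = p + 1 := by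
  intro p
  induction p with
  | zero => exact fun hp => ⟨.cons (adj_hub_hpath a i hp) .nil, rfl⟩
  | succ p ih =>
    intro hp
    obtain ⟨w, hw⟩ := ih (by omega)
    exact ⟨w.concat (adj_hpath a i hp), by simp [hw]⟩

lemma walk_dpath (t : Fin d) :
    ∀ (p : ℕ) (hp : p < ℓ - 1),
      ∃ w : (OVGraph k n d ℓ a).Walk (.dim t) (.dpath t ⟨p, hp⟩), w.length = p + 1 := by
  intro p
  induction p with
  | zero => exact fun hp => ⟨.cons (adj_dim_dpath a t hp) .nil, rfl⟩
  | succ p ih =>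
    intro hp
    obtain ⟨w, hw⟩ := ih (by omega)
    exact ⟨w.concat (adj_dpath a t hp), by simp [hw]⟩

lemma branch_of_phi (hℓ : 2 ≤ ℓ) {s : OVVert k n d ℓ} (i : Fin k) (hs : phi i s ≤ ℓ) :
    (∃ j, s = .vec i j) ∨ s = .hub i ∨ ∃ q, s = .hpath i q := by
  rcases s with ⟨i', j'⟩ | i' | ⟨i', q⟩ | t' | ⟨t', q⟩ <;>
    simp only [phi] at hs
  · split_ifs at hs with h
    · exact Or.inl ⟨j', by rw [h]⟩
    · omega
  · split_ifs at hs with h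
    · exact Or.inr (Or.inl (by rw [h]))
    · omega
  · split_ifs at hs with h
    · exact Or.inr (Or.inr ⟨q, by rw [h]⟩)
    · omega
  · omega
  · omega

end OVAux

open OVAux

/-- The reduction graph has a `k`-dominating set at distance `ℓ` iff there are vectors
`a₁ ∈ A₁, …, a_k ∈ A_k` such that in every coordinate at least one of them is `0`. -/
theorem stmt8 (k n d ℓ : ℕ) (hk : 1 ≤ k) (hℓ : 2 ≤ ℓ) (hd : 1 ≤ d) (hn : 1 ≤ n)
    (a : Fin k → Fin n → Fin d → Bool) :
    (∃ S : Finset (OVVert k n d ℓ), S.card = k ∧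
        ∀ v : OVVert k n d ℓ, ∃ s ∈ S, ∃ w : (OVGraph k n d ℓ a).Walk s v, w.length ≤ ℓ) ↔
      (∃ f : Fin k → Fin n, ∀ t : Fin d, ∃ i : Fin k, a i (f i) t = false) := by
  classical
  have hℓ1 : 0 < ℓ - 1 := by omega
  have hℓ2 : ℓ - 2 < ℓ - 1 := by omega
  constructor
  · rintro ⟨S, hcard, hdom⟩
    choose g hgS wk hwk using fun i : Fin k => hdom (.hpath i ⟨ℓ - 2, hℓ2⟩)
    have hphi : ∀ i, phi i (g i) ≤ ℓ := by
      intro i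
      have h1 := pot (phi_lip hℓ a i) (wk i)
      have h2 : phi i (OVVert.hpath i ⟨ℓ - 2, hℓ2⟩ : OVVert k n d ℓ) = 0 := by
        simp [phi]
      rw [h2] at h1
      have := hwk i
      omega
    have hbr := fun i => branch_of_phi hℓ i (hphi i)
    have hginj : Function.Injective g := by
      intro i i' he
      rcases hbr i with ⟨j, hj⟩ | hj | ⟨q, hj⟩ <;>
        rcases hbr i' with ⟨j', hj'⟩ | hj' | ⟨q', hj'⟩ <;>
        rw [hj, hj'] at he <;> simp at he <;>
        first | exact he.1 | exact he
    have himg : Finset.univ.image g = S := by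
      apply Finset.eq_of_subset_of_card_le
      · intro s hs
        simp only [Finset.mem_image, Finset.mem_univ, true_and] at hs
        obtain ⟨i, rfl⟩ := hs
        exact hgS i
      · rw [hcard, Finset.card_image_of_injective _ hginj, Finset.card_univ,
          Fintype.card_fin]
    refine ⟨fun i => match g i with | .vec _ j => j | _ => ⟨0, hn⟩, ?_⟩
    intro t
    obtain ⟨s, hsS, w, hw⟩ := hdom (.dpath t ⟨ℓ - 2, hℓ2⟩)
    have hψ : psi a t s ≤ ℓ := by
      have h1 := pot (psi_lip hℓ a t) w
      have h2 : psi a t (OVVert.dpath t ⟨ℓ - 2, hℓ2⟩ : OVVert k n d ℓ) = 0 := by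
        simp [psi]
      rw [h2] at h1
      omega
    rw [← himg] at hsS
    simp only [Finset.mem_image, Finset.mem_univ, true_and] at hsS
    obtain ⟨i, rfl⟩ := hsS
    rcases hbr i with ⟨j, hj⟩ | hj | ⟨q, hj⟩
    · rw [hj] at hψ
      by_cases ha : a i j t = false
      · refine ⟨i, ?_⟩
        simp only [hj]
        exact ha
      · simp [psi, ha] at hψ
    · rw [hj] at hψ
      simp [psi] at hψ
    · rw [hj] at hψ
      simp [psi] at hψ
      omega
  · rintro ⟨f, hf⟩
    refine ⟨Finset.univ.image (fun i => OVVert.vec i (f i)), ?_, ?_⟩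
    · rw [Finset.card_image_of_injective, Finset.card_univ, Fintype.card_fin]
      intro i i' h
      simp only [OVVert.vec.injEq] at h
      exact h.1
    · intro v
      have hmem : ∀ i : Fin k, (OVVert.vec i (f i) : OVVert k n d ℓ) ∈
          Finset.univ.image (fun i => OVVert.vec i (f i)) := fun i =>
        Finset.mem_image_of_mem _ (Finset.mem_univ i)
      rcases v with ⟨i, j⟩ | i | ⟨i, ⟨q, hq⟩⟩ | t | ⟨t, ⟨q, hq⟩⟩
      · exact ⟨_, hmem i,
          .cons (adj_vec_hub a i (f i)) (.cons (adj_vec_hub a i j).symm .nil), by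
            simp; omega⟩
      · exact ⟨_, hmem i, .cons (adj_vec_hub a i (f i)) .nil, by simp; omega⟩
      · obtain ⟨w, hw⟩ := walk_hpath a i q hq
        exact ⟨_, hmem i, .cons (adj_vec_hub a i (f i)) w, by
          simp [hw]; omega⟩
      · obtain ⟨i, hi⟩ := hf t
        exact ⟨_, hmem i, .cons (adj_vec_dim a hi) .nil, by simp; omega⟩
      · obtain ⟨i, hi⟩ := hf t
        obtain ⟨w, hw⟩ := walk_dpath a t q hq
        exact ⟨_, hmem i, .cons (adj_vec_dim a hi) w, by
          simp [hw]; omega⟩
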